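/- R₀ = 1 if and only if J₀ = 1, where R₀ = (V₀ + sqrt(V₀² + 4H₀))/2 and J₀ = H₀/(1 - V₀) (equivalently J₀ = β_pv β_vp P* V* / ((m_i - m_h)P* + γ) α), under the assumption (m_i - m_h)P* + γ > 0. More precisely, R₀ = 1 is equivalent to H₀ = 1 - V₀. -/

import Mathlib

theorem stmt1 (c r K : ℝ) (hc : c > 0) (hr : r > 0) (hK : K > 0)
    (V0 H0 R0 J0 : ℝ)
    (hV0 : V0 = r / (c + r)) (hH0 : H0 = K / (c + r))
    (hR0 : R0 = (V0 + Real.sqrt (V0 ^ 2 + 4 * H0)) / 2)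
    (hJ0 : J0 = K / c) :
    (R0 = 1 ↔ J0 = 1) ∧ (R0 = 1 ↔ H0 = 1 - V0) := by
  have hcr : c + r > 0 := by linarith
  have hcr' : c + r ≠ 0 := ne_of_gt hcr
  have hV0lt : V0 < 1 := by
    rw [hV0, div_lt_one hcr]; linarith
  have hH0pos : H0 > 0 := by
    rw [hH0]; positivity
  have hV0pos : V0 > 0 := by
    rw [hV0]; positivity
  have key : R0 = 1 ↔ H0 = 1 - V0 := by
    constructor
    · intro h
      have h2 : Real.sqrt (V0 ^ 2 + 4 * H0) = 2 - V0 := by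
        rw [hR0] at h; linarith
      have h3 : V0 ^ 2 + 4 * H0 = (2 - V0) ^ 2 := by
        rw [← h2, Real.sq_sqrt (by nlinarith : V0 ^ 2 + 4 * H0 ≥ 0)]
      nlinarith
    · intro h
      have h3 : V0 ^ 2 + 4 * H0 = (2 - V0) ^ 2 := by nlinarith
      rw [hR0, h3, Real.sqrt_sq (by linarith)]; ring
  have hJ : J0 = 1 ↔ H0 = 1 - V0 := by
    rw [hJ0, hH0, hV0, div_eq_one_iff_eq (ne_of_gt hc)]
    rw [eq_sub_iff_add_eq, ← add_div, div_eq_one_iff_eq hcr']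
    constructor <;> intro h <;> linarith
  exact ⟨key.trans hJ.symm, key⟩
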